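/- Sufficiency of the Wardrop condition: let E be a finite edge set, OD a finite set of origin–destination pairs with nonempty finite path sets P_{ij} and incidence coefficients δ_{ep} ∈ {0,1}, demands d_{ij} ≥ 0, and for each e let τ_e : [0,∞) → ℝ be continuous and nondecreasing with σ_e(f) = ∫₀^f τ_e(z) dz. Suppose x* ∈ X(d) is such that for every (i,j) ∈ OD and every path p ∈ P_{ij} with x*_p > 0 one has ∑_e δ_{ep} τ_e(f_e(x*)) = min_{q∈P_{ij}} ∑_e δ_{eq} τ_e(f_e(x*)). Then x* minimizes ∑_{e∈E} σ_e(f_e(x)) over X(d). -/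
import Mathlib

lemma tau_intInt {τ : ℝ → ℝ} (hc : ContinuousOn τ (Set.Ici 0))
    {a b : ℝ} (ha : 0 ≤ a) (hb : 0 ≤ b) : IntervalIntegrable τ MeasureTheory.volume a b := by
  apply (hc.mono ?_).intervalIntegrable
  intro z hz
  exact le_trans (le_min ha hb) hz.1

lemma grad_ineq {τ : ℝ → ℝ} (hc : ContinuousOn τ (Set.Ici 0)) (hm : MonotoneOn τ (Set.Ici 0))
    {a b : ℝ} (ha : 0 ≤ a) (hb : 0 ≤ b) :
    τ a * (b - a) ≤ ∫ z in a..b, τ z := by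
  rcases le_total a b with h | h
  · have : ∫ z in a..b, τ a ≤ ∫ z in a..b, τ z := by
      apply intervalIntegral.integral_mono_on h (by simp) (tau_intInt hc ha hb)
      intro z hz
      exact hm (Set.mem_Ici.mpr ha) (Set.mem_Ici.mpr (ha.trans hz.1)) hz.1
    simpa [mul_comm] using this
  · have : ∫ z in b..a, τ z ≤ ∫ z in b..a, τ a := by
      apply intervalIntegral.integral_mono_on h (tau_intInt hc hb ha) (by simp)
      intro z hz
      exact hm (Set.mem_Ici.mpr (hb.trans hz.1)) (Set.mem_Ici.mpr ha) hz.2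
    have h2 : (∫ z in a..b, τ z) = -∫ z in b..a, τ z := by
      rw [intervalIntegral.integral_symm]
    rw [h2]
    have := neg_le_neg this
    simp only [intervalIntegral.integral_const, smul_eq_mul] at this ⊢
    nlinarith [this]

/-- Sufficiency of the Wardrop condition: if `x*` is feasible and every used path has
minimal cost among the paths of its OD pair (at the edge costs `τ_e(f_e(x*))`), then
`x*` minimizes the Beckmann objective `∑_e σ_e(f_e(x))`, `σ_e(f) = ∫₀^f τ_e(z) dz`,
over the feasible set `X(d)`. -/
theorem wardrop_implies_beckmann_min
    {E OD P : Type*} [Fintype E] [Fintype OD] [Fintype P] [DecidableEq OD]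
    (part : P → OD)
    (hne : ∀ ij, (Finset.univ.filter fun p => part p = ij).Nonempty)
    (δ : E → P → ℝ) (hδ : ∀ e p, δ e p = 0 ∨ δ e p = 1)
    (d : OD → ℝ) (hd : ∀ ij, 0 ≤ d ij)
    (τ : E → ℝ → ℝ)
    (hτcont : ∀ e, ContinuousOn (τ e) (Set.Ici 0))
    (hτmono : ∀ e, MonotoneOn (τ e) (Set.Ici 0))
    (σ : E → ℝ → ℝ) (hσ : ∀ e f, σ e f = ∫ z in (0:ℝ)..f, τ e z)
    (xstar : P → ℝ) (hxstar : ∀ p, 0 ≤ xstar p)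
    (hxstard : ∀ ij, ∑ p ∈ Finset.univ.filter (fun p => part p = ij), xstar p = d ij)
    (hwardrop : ∀ ij, ∀ p, part p = ij → 0 < xstar p →
      ∑ e, δ e p * τ e (∑ q, δ e q * xstar q) =
        Finset.inf' (Finset.univ.filter fun q => part q = ij) (hne ij)
          (fun q => ∑ e, δ e q * τ e (∑ q', δ e q' * xstar q'))) :
    ∀ x : P → ℝ, (∀ p, 0 ≤ x p) →
      (∀ ij, ∑ p ∈ Finset.univ.filter (fun p => part p = ij), x p = d ij) →
      ∑ e, σ e (∑ p, δ e p * xstar p) ≤ ∑ e, σ e (∑ p, δ e p * x p) := by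
  intro x hx hxd
  have hδ0 : ∀ e p, 0 ≤ δ e p := by
    intro e p; rcases hδ e p with h | h <;> simp [h]
  set g : E → ℝ := fun e => ∑ q, δ e q * xstar q with hg
  set f : E → ℝ := fun e => ∑ p, δ e p * x p with hf
  have hg0 : ∀ e, 0 ≤ g e := fun e =>
    Finset.sum_nonneg fun p _ => mul_nonneg (hδ0 e p) (hxstar p)
  have hf0 : ∀ e, 0 ≤ f e := fun e =>
    Finset.sum_nonneg fun p _ => mul_nonneg (hδ0 e p) (hx p)
  -- convexity-type gradient inequality per edge
  have key1 : ∀ e, τ e (g e) * (f e - g e) ≤ σ e (f e) - σ e (g e) := by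
    intro e
    have heq : σ e (f e) - σ e (g e) = ∫ z in (g e)..(f e), τ e z := by
      rw [hσ, hσ,
        intervalIntegral.integral_interval_sub_left
          (tau_intInt (hτcont e) le_rfl (hf0 e))
          (tau_intInt (hτcont e) le_rfl (hg0 e))]
    rw [heq]
    exact grad_ineq (hτcont e) (hτmono e) (hg0 e) (hf0 e)
  have key1s : ∑ e, τ e (g e) * (f e - g e) ≤
      (∑ e, σ e (f e)) - ∑ e, σ e (g e) := by
    rw [← Finset.sum_sub_distrib]
    exact Finset.sum_le_sum fun e _ => key1 e
  -- path costs
  set c : P → ℝ := fun p => ∑ e, δ e p * τ e (g e) with hc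
  have swap : ∀ y : P → ℝ, ∑ e, τ e (g e) * (∑ p, δ e p * y p) = ∑ p, c p * y p := by
    intro y
    simp_rw [hc, Finset.mul_sum, Finset.sum_mul]
    rw [Finset.sum_comm]
    apply Finset.sum_congr rfl; intro p _
    apply Finset.sum_congr rfl; intro e _
    ring
  have key2 : ∑ e, τ e (g e) * (f e - g e) = (∑ p, c p * x p) - ∑ p, c p * xstar p := by
    simp_rw [mul_sub]
    rw [Finset.sum_sub_distrib, swap x, swap xstar]
  -- Wardrop implies x* has minimal total cost
  have key3 : ∑ p, c p * xstar p ≤ ∑ p, c p * x p := by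
    rw [← Finset.sum_fiberwise Finset.univ part (fun p => c p * xstar p),
        ← Finset.sum_fiberwise Finset.univ part (fun p => c p * x p)]
    apply Finset.sum_le_sum
    intro ij _
    set lam : ℝ := Finset.inf' (Finset.univ.filter fun q => part q = ij) (hne ij)
      (fun q => ∑ e, δ e q * τ e (g e)) with hlam
    have hL : ∑ p ∈ Finset.univ.filter (fun p => part p = ij), c p * xstar p
        = lam * d ij := by
      rw [← hxstard ij, Finset.mul_sum]
      apply Finset.sum_congr rfl
      intro p hp
      have hpij : part p = ij := (Finset.mem_filter.mp hp).2
      rcases (hxstar p).lt_or_eq with h | h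
      · show c p * xstar p = lam * xstar p
        have hw := hwardrop ij p hpij h
        rw [mul_comm (c p), mul_comm lam]
        exact congrArg (fun t => xstar p * t) hw
      · rw [← h]; ring
    have hR : lam * d ij ≤ ∑ p ∈ Finset.univ.filter (fun p => part p = ij), c p * x p := by
      rw [← hxd ij, Finset.mul_sum]
      apply Finset.sum_le_sum
      intro p hp
      exact mul_le_mul_of_nonneg_right (Finset.inf'_le _ hp) (hx p)
    rw [hL]; exact hR
  have h0 : (0:ℝ) ≤ ∑ e, τ e (g e) * (f e - g e) := by
    rw [key2]; linarith
  linarith
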